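/- Fix integers n > k > 1, an n-point dataset X ⊂ ℝ^{n−1}, and a partition C_1 ⊔ ⋯ ⊔ C_k = [n] such that every cluster satisfies |C_m| > 1 and the Dunn index satisfies DI(X; C_1,…,C_k) > 1. Then for every ε with 1 < ε ≤ DI(X; C_1,…,C_k), there exists an n-point dataset X_ε ⊂ ℝ^{n−1} with DI(X_ε; C_1,…,C_k) = ε, and yet for every perplexity ρ ∈ (1, n−1), TSNE_ρ(X) = TSNE_ρ(X_ε). -/

import Mathlib

open scoped BigOperators RealInnerProductSpace
noncomputable section

namespace TSNEPaper

variable {n k : ℕ} {E F : Type*}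

/-- The set of nearest neighbors of point `i` (used for the `σ = 0` limit of the
conditional affinity). -/
def nearestSet [NormedAddCommGroup E] (X : Fin n → E) (i : Fin n) : Finset (Fin n) :=
  (Finset.univ.erase i).filter fun j => ∀ l ∈ Finset.univ.erase i, ‖X i - X j‖ ≤ ‖X i - X l‖

/-- Conditional t-SNE affinity `P_{j|i}(X; σ)`.  For `σ = 0` we take the limiting value
as `σ → 0⁺`, which puts equal mass on the nearest neighbors of `i`. -/
def condAffinity [NormedAddCommGroup E] (X : Fin n → E) (σ : ℝ) (i j : Fin n) : ℝ :=
  if j = i then 0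
  else if σ = 0 then (if j ∈ nearestSet X i then ((nearestSet X i).card : ℝ)⁻¹ else 0)
  else Real.exp (-‖X i - X j‖ ^ 2 / (2 * σ ^ 2)) /
      ∑ l ∈ Finset.univ.erase i, Real.exp (-‖X i - X l‖ ^ 2 / (2 * σ ^ 2))

/-- Base-2 Shannon entropy of a distribution on `Fin n`. -/
def entropy2 (p : Fin n → ℝ) : ℝ := -∑ j, p j * Real.logb 2 (p j)

/-- `σ` is a perplexity-`ρ`-calibrated bandwidth for point `i`: it is nonnegative and
minimizes the gap between the entropy of `P_{·|i}(X;σ)` and `log₂ ρ`. -/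
def IsCalibrated [NormedAddCommGroup E] (X : Fin n → E) (ρ : ℝ) (i : Fin n) (σ : ℝ) : Prop :=
  0 ≤ σ ∧ ∀ σ' : ℝ, 0 ≤ σ' →
    |entropy2 (condAffinity X σ i) - Real.logb 2 ρ| ≤
      |entropy2 (condAffinity X σ' i) - Real.logb 2 ρ|

/-- The calibrated bandwidth `σ_i^*` (well defined by uniqueness of the minimizer). -/
def sigmaStar [NormedAddCommGroup E] (X : Fin n → E) (ρ : ℝ) (i : Fin n) : ℝ :=
  Classical.epsilon (IsCalibrated X ρ i)

/-- Symmetrized input affinity `P_{ij}(X)`. -/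
def inAffinity [NormedAddCommGroup E] (X : Fin n → E) (ρ : ℝ) (i j : Fin n) : ℝ :=
  if i = j then 0
  else (condAffinity X (sigmaStar X ρ j) j i + condAffinity X (sigmaStar X ρ i) i j) / (2 * n)

/-- Output affinity `Q_{ij}(Y)`. -/
def outAffinity [NormedAddCommGroup F] (Y : Fin n → F) (i j : Fin n) : ℝ :=
  if i = j then 0
  else (1 + ‖Y i - Y j‖ ^ 2)⁻¹ /
    ∑ p ∈ Finset.univ.offDiag, (1 + ‖Y p.1 - Y p.2‖ ^ 2)⁻¹

/-- The t-SNE loss `L_X(Y) = KL(P(X) ‖ Q(Y))`. -/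
def tsneLoss {d : ℕ} [NormedAddCommGroup E] (X : Fin n → E) (ρ : ℝ)
    (Y : Fin n → EuclideanSpace ℝ (Fin d)) : ℝ :=
  ∑ p ∈ Finset.univ.offDiag,
    inAffinity X ρ p.1 p.2 * Real.log (inAffinity X ρ p.1 p.2 / outAffinity Y p.1 p.2)

/-- The set of stationary t-SNE outputs in `ℝ^d` for input `X` and perplexity `ρ`. -/
def TSNE [NormedAddCommGroup E] (d : ℕ) (ρ : ℝ) (X : Fin n → E) :
    Set (Fin n → EuclideanSpace ℝ (Fin d)) :=
  {Y : Fin n → EuclideanSpace ℝ (Fin d) | fderiv ℝ (tsneLoss X ρ) Y = 0}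

/-- The image of t-SNE: all stationary outputs over all `n`-point inputs in `ℝ^{n-1}`. -/
def IMTSNE (n d : ℕ) (ρ : ℝ) : Set (Fin n → EuclideanSpace ℝ (Fin d)) :=
  ⋃ X : Fin n → EuclideanSpace ℝ (Fin (n - 1)), TSNE d ρ X

/-- The `m`-th cluster of the partition of `[n]` encoded by the labelling `ℓ`. -/
def cluster (ℓ : Fin n → Fin k) (m : Fin k) : Finset (Fin n) :=
  Finset.univ.filter fun i => ℓ i = m

/-- Average within-cluster distance `a(i)`. -/
def aScore [NormedAddCommGroup E] (X : Fin n → E) (ℓ : Fin n → Fin k) (i : Fin n) : ℝ :=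
  (∑ j ∈ cluster ℓ (ℓ i), ‖X i - X j‖) / (((cluster ℓ (ℓ i)).card : ℝ) - 1)

/-- Closest average across-cluster distance `b(i)`. -/
def bScore [NormedAddCommGroup E] (X : Fin n → E) (ℓ : Fin n → Fin k) (i : Fin n) : ℝ :=
  sInf {r : ℝ | ∃ m : Fin k, m ≠ ℓ i ∧
    r = (∑ j ∈ cluster ℓ m, ‖X i - X j‖) / ((cluster ℓ m).card : ℝ)}

/-- Silhouette score of point `i`. -/
def silhouette [NormedAddCommGroup E] (X : Fin n → E) (ℓ : Fin n → Fin k) (i : Fin n) : ℝ :=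
  if (cluster ℓ (ℓ i)).card = 1 then 0
  else (bScore X ℓ i - aScore X ℓ i) / max (aScore X ℓ i) (bScore X ℓ i)

/-- Average silhouette score `S̄(X; C₁,…,C_k)`. -/
def avgSilhouette [NormedAddCommGroup E] (X : Fin n → E) (ℓ : Fin n → Fin k) : ℝ :=
  (∑ i, silhouette X ℓ i) / (n : ℝ)

/-- Centroid `E(S)` of the points indexed by `S`. -/
def centroid [NormedAddCommGroup E] [NormedSpace ℝ E] (X : Fin n → E)
    (S : Finset (Fin n)) : E :=
  ((S.card : ℝ))⁻¹ • ∑ i ∈ S, X i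

/-- Numerator (between-cluster term) of the Calinski–Harabasz index. -/
def chNum [NormedAddCommGroup E] [NormedSpace ℝ E] (X : Fin n → E) (ℓ : Fin n → Fin k) : ℝ :=
  ((k : ℝ) - 1)⁻¹ *
    ∑ m : Fin k, ((cluster ℓ m).card : ℝ) *
      ‖centroid X (cluster ℓ m) - centroid X Finset.univ‖ ^ 2

/-- Denominator (within-cluster term) of the Calinski–Harabasz index. -/
def chDen [NormedAddCommGroup E] [NormedSpace ℝ E] (X : Fin n → E) (ℓ : Fin n → Fin k) : ℝ :=
  ((n : ℝ) - (k : ℝ))⁻¹ *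
    ∑ m : Fin k, ∑ i ∈ cluster ℓ m, ‖X i - centroid X (cluster ℓ m)‖ ^ 2

/-- Calinski–Harabasz index, valued in `[0,∞]`, with the conventions `CH = 1` when both
numerator and denominator vanish and `CH = ∞` when only the denominator vanishes. -/
def CHindex [NormedAddCommGroup E] [NormedSpace ℝ E] (X : Fin n → E) (ℓ : Fin n → Fin k) :
    EReal :=
  if chDen X ℓ = 0 then (if chNum X ℓ = 0 then 1 else ⊤)
  else ((chNum X ℓ / chDen X ℓ : ℝ) : EReal)

/-- Minimum between-cluster distance (numerator of the Dunn index). -/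
def diNum [NormedAddCommGroup E] (X : Fin n → E) (ℓ : Fin n → Fin k) : ℝ :=
  sInf {r : ℝ | ∃ i j : Fin n, ℓ i ≠ ℓ j ∧ r = ‖X i - X j‖}

/-- Maximum within-cluster distance (denominator of the Dunn index). -/
def diDen [NormedAddCommGroup E] (X : Fin n → E) (ℓ : Fin n → Fin k) : ℝ :=
  sSup {r : ℝ | ∃ i j : Fin n, ℓ i = ℓ j ∧ r = ‖X i - X j‖}

/-- Dunn index, valued in `[0,∞]`, with the conventions `DI = 1` when both numerator and
denominator vanish and `DI = ∞` when only the denominator vanishes. -/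
def DIindex [NormedAddCommGroup E] (X : Fin n → E) (ℓ : Fin n → Fin k) : EReal :=
  if diDen X ℓ = 0 then (if diNum X ℓ = 0 then 1 else ⊤)
  else ((diNum X ℓ / diDen X ℓ : ℝ) : EReal)

/-- `Y` is an `(α, Y i₀)`-outlier configuration: there is a hyperplane (with unit normal `v`)
separating `Y i₀` from the remaining points with margin width at least
`α · max{1, diam(Y ∖ {Y i₀})}`. -/
def IsOutlierConfig [NormedAddCommGroup F] [InnerProductSpace ℝ F] (Y : Fin n → F)
    (i0 : Fin n) (α : ℝ) : Prop :=
  0 < α ∧ ∃ v : F, ‖v‖ = 1 ∧ ∀ i : Fin n, i ≠ i0 →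
    α * max 1 (Metric.diam (Y '' {i : Fin n | i ≠ i0})) ≤ ⟪Y i - Y i0, v⟫

/-- The outlier number `α(Y, y₀)`: the largest `α` for which `Y` is an `(α, Y i₀)`-outlier
configuration (`0` if there is none). -/
def outlierNumber [NormedAddCommGroup F] [InnerProductSpace ℝ F] (Y : Fin n → F)
    (i0 : Fin n) : ℝ :=
  sSup {α : ℝ | IsOutlierConfig Y i0 α}



/-! ### Auxiliary lemmas -/

section Helpers

theorem norm_shift_le_iff [NormedAddCommGroup E] {a b a' b' : E} {c : ℝ}
    (ha : ‖a'‖ ^ 2 = ‖a‖ ^ 2 + c) (hb : ‖b'‖ ^ 2 = ‖b‖ ^ 2 + c) :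
    ‖a'‖ ≤ ‖b'‖ ↔ ‖a‖ ≤ ‖b‖ := by
  rw [← pow_le_pow_iff_left₀ (norm_nonneg a') (norm_nonneg b') (two_ne_zero),
    ← pow_le_pow_iff_left₀ (norm_nonneg a) (norm_nonneg b) (two_ne_zero), ha, hb,
    add_le_add_iff_right]

theorem nearestSet_shift [NormedAddCommGroup E] {X Xε : Fin n → E} {c : ℝ}
    (hΔ : ∀ i j : Fin n, i ≠ j → ‖Xε i - Xε j‖ ^ 2 = ‖X i - X j‖ ^ 2 + c) :
    nearestSet Xε = nearestSet X := by
  funext i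
  unfold nearestSet
  apply Finset.filter_congr
  intro j hj
  have hji : j ≠ i := (Finset.mem_erase.1 hj).1
  constructor <;> intro h l hl <;>
    have hli : l ≠ i := (Finset.mem_erase.1 hl).1
  · exact (norm_shift_le_iff (hΔ i j (Ne.symm hji)) (hΔ i l (Ne.symm hli))).1 (h l hl)
  · exact (norm_shift_le_iff (hΔ i j (Ne.symm hji)) (hΔ i l (Ne.symm hli))).2 (h l hl)

theorem condAffinity_shift [NormedAddCommGroup E] {X Xε : Fin n → E} {c : ℝ}
    (hΔ : ∀ i j : Fin n, i ≠ j → ‖Xε i - Xε j‖ ^ 2 = ‖X i - X j‖ ^ 2 + c) :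
    condAffinity Xε = condAffinity X := by
  funext σ i j
  unfold condAffinity
  by_cases hji : j = i
  · simp [hji]
  by_cases hσ : σ = 0
  · simp [hji, hσ, nearestSet_shift hΔ]
  · simp only [hji, hσ, if_false]
    have key : ∀ l : Fin n, l ≠ i →
        Real.exp (-‖Xε i - Xε l‖ ^ 2 / (2 * σ ^ 2)) =
          Real.exp (-‖X i - X l‖ ^ 2 / (2 * σ ^ 2)) * Real.exp (-c / (2 * σ ^ 2)) := by
      intro l hl
      rw [← Real.exp_add, hΔ i l (Ne.symm hl)]
      ring_nf
    rw [key j hji, Finset.sum_congr rfl (fun l hl => key l (Finset.mem_erase.1 hl).1),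
      ← Finset.sum_mul, mul_div_mul_right _ _ (Real.exp_ne_zero _)]

theorem TSNE_shift [NormedAddCommGroup E] {X Xε : Fin n → E}
    (hA : condAffinity Xε = condAffinity X) (d : ℕ) (ρ : ℝ) :
    TSNE d ρ X = TSNE d ρ Xε := by
  have hI : IsCalibrated Xε = IsCalibrated X := by
    unfold IsCalibrated
    simp only [hA]
  have hσ : sigmaStar Xε = sigmaStar X := by
    unfold sigmaStar
    simp only [hI]
  have hP : inAffinity Xε = inAffinity X := by
    unfold inAffinity
    simp only [hA, hσ]
  unfold TSNE tsneLoss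
  simp only [hP]

def padMap {m N : ℕ} (h : m ≤ N) :
    EuclideanSpace ℝ (Fin m) →ₗ[ℝ] EuclideanSpace ℝ (Fin N) where
  toFun x := (WithLp.equiv 2 _).symm (fun t : Fin N => if h' : (t : ℕ) < m then x ⟨t, h'⟩ else 0)
  map_add' x y := by
    ext t
    by_cases h' : (t : ℕ) < m <;> simp [h']
  map_smul' r x := by
    ext t
    by_cases h' : (t : ℕ) < m <;> simp [h']

theorem padMap_norm {m N : ℕ} (h : m ≤ N) (x : EuclideanSpace ℝ (Fin m)) :
    ‖padMap h x‖ = ‖x‖ := by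
  rw [EuclideanSpace.norm_eq, EuclideanSpace.norm_eq]
  congr 1
  have hinj : Function.Injective (Fin.castLE h) := Fin.castLE_injective h
  have h1 : ∑ t : Fin N, ‖padMap h x t‖ ^ 2
      = ∑ t ∈ Finset.univ.image (Fin.castLE h), ‖padMap h x t‖ ^ 2 := by
    refine (Finset.sum_subset (Finset.subset_univ _) ?_).symm
    intro t _ ht
    have : ¬ ((t : ℕ) < m) := by
      intro hlt
      exact ht (Finset.mem_image.2 ⟨⟨t, hlt⟩, Finset.mem_univ _, rfl⟩)
    simp [padMap, this]
  rw [h1, Finset.sum_image (fun a _ b _ hab => hinj hab)]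
  refine Finset.sum_congr rfl fun s _ => ?_
  have hlt : ((Fin.castLE h s : Fin N) : ℕ) < m := s.isLt
  simp only [padMap, LinearMap.coe_mk, AddHom.coe_mk, WithLp.equiv_symm_apply, PiLp.toLp_apply, hlt, dif_pos]
  congr 1

def padIso {m N : ℕ} (h : m ≤ N) :
    EuclideanSpace ℝ (Fin m) →ₗᵢ[ℝ] EuclideanSpace ℝ (Fin N) :=
  ⟨padMap h, padMap_norm h⟩

theorem euclid_sum_apply {α ι : Type*} [Fintype ι] (s : Finset α)
    (f : α → EuclideanSpace ℝ ι) (t : ι) : (∑ i ∈ s, f i) t = ∑ i ∈ s, f i t := by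
  induction s using Finset.cons_induction with
  | empty => simp
  | cons a s ha ih => simp [Finset.sum_cons, ih]

theorem euclid_norm_sq {ι : Type*} [Fintype ι] (v : EuclideanSpace ℝ ι) :
    ‖v‖ ^ 2 = ∑ t, (v t) ^ 2 := by
  rw [EuclideanSpace.norm_eq, Real.sq_sqrt (by positivity)]
  refine Finset.sum_congr rfl fun t _ => ?_
  rw [Real.norm_eq_abs, sq_abs]

theorem exists_shift {n : ℕ} (hn : 0 < n) (X : Fin n → EuclideanSpace ℝ (Fin (n-1)))
    {c : ℝ} (hc : 0 ≤ c) :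
    ∃ Xε : Fin n → EuclideanSpace ℝ (Fin (n-1)),
      ∀ i j : Fin n, i ≠ j → ‖Xε i - Xε j‖ ^ 2 = ‖X i - X j‖ ^ 2 + c := by
  classical
  set G := EuclideanSpace ℝ (Fin (n-1) ⊕ Fin n) with hG
  set xbar : EuclideanSpace ℝ (Fin (n-1)) := (n : ℝ)⁻¹ • ∑ p, X p with hxbar
  set z : Fin n → G := fun i =>
    (WithLp.equiv 2 _).symm (Sum.elim (fun s => X i s - xbar s)
      (fun s : Fin n => Real.sqrt (c/2) * ((if s = i then (1:ℝ) else 0) - (n : ℝ)⁻¹))) with hzdef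
  have hzl : ∀ i s, z i (Sum.inl s) = X i s - xbar s := fun i s => rfl
  have hzr : ∀ i s, z i (Sum.inr s)
      = Real.sqrt (c/2) * ((if s = i then (1:ℝ) else 0) - (n : ℝ)⁻¹) := fun i s => rfl
  have hnz : (n : ℝ) ≠ 0 := Nat.cast_ne_zero.2 hn.ne'
  have hnorm : ∀ i j : Fin n, i ≠ j → ‖z i - z j‖ ^ 2 = ‖X i - X j‖ ^ 2 + c := by
    intro i j hij
    rw [euclid_norm_sq, euclid_norm_sq, Fintype.sum_sum_type]
    have hL : ∀ s : Fin (n-1), ((z i - z j) (Sum.inl s)) ^ 2 = ((X i - X j) s) ^ 2 := by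
      intro s
      rw [PiLp.sub_apply, hzl, hzl, PiLp.sub_apply]
      ring_nf
    have hR : ∀ s : Fin n, ((z i - z j) (Sum.inr s)) ^ 2
        = (c/2) * ((if s = i then (1:ℝ) else 0) + (if s = j then 1 else 0)) := by
      intro s
      rw [PiLp.sub_apply, hzr, hzr]
      have hfac : Real.sqrt (c/2) * ((if s = i then (1:ℝ) else 0) - (n : ℝ)⁻¹)
          - Real.sqrt (c/2) * ((if s = j then (1:ℝ) else 0) - (n : ℝ)⁻¹)
          = Real.sqrt (c/2) * ((if s = i then (1:ℝ) else 0) - (if s = j then 1 else 0)) := by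
        ring
      rw [hfac, mul_pow, Real.sq_sqrt (by linarith)]
      congr 1
      by_cases h1 : s = i <;> by_cases h2 : s = j
      · exact absurd (h1.symm.trans h2) hij
      · simp [h1, h2, hij]
      · simp [h1, h2, Ne.symm hij]
      · simp [h1, h2]
    rw [Finset.sum_congr rfl (fun s _ => hL s), Finset.sum_congr rfl (fun s _ => hR s)]
    have : ∑ s : Fin n, (c/2) * ((if s = i then (1:ℝ) else 0) + (if s = j then 1 else 0))
        = c := by
      rw [← Finset.mul_sum, Finset.sum_add_distrib]
      simp only [Finset.sum_ite_eq', Finset.mem_univ, if_pos]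
      ring
    rw [this]
  have hsum : ∑ i, z i = 0 := by
    ext t
    rw [euclid_sum_apply]
    show _ = (0:ℝ)
    match t with
    | Sum.inl s =>
      simp only [hzl]
      rw [Finset.sum_sub_distrib, Finset.sum_const, Finset.card_univ, Fintype.card_fin]
      have : xbar s = (n : ℝ)⁻¹ * ∑ p, X p s := by
        rw [hxbar, PiLp.smul_apply, euclid_sum_apply]
        simp
      rw [this]
      rw [nsmul_eq_mul, ← mul_assoc, mul_inv_cancel₀ hnz, one_mul, sub_self]
    | Sum.inr s =>
      simp only [hzr]
      rw [← Finset.mul_sum, Finset.sum_sub_distrib]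
      simp [Finset.sum_ite_eq', hnz]
  set i0 : Fin n := ⟨0, hn⟩ with hi0
  set sFin : Finset G := (Finset.univ.erase i0).image z with hsFin
  set S : Submodule ℝ G := Submodule.span ℝ (sFin : Set G) with hS
  have hzmem : ∀ i, z i ∈ S := by
    intro i
    by_cases hii : i = i0
    · have hzz : z i0 = - ∑ l ∈ Finset.univ.erase i0, z l := by
        have h0 := Finset.add_sum_erase Finset.univ z (Finset.mem_univ i0)
        rw [hsum] at h0
        exact eq_neg_of_add_eq_zero_left h0
      rw [hii, hzz]
      exact neg_mem (Submodule.sum_mem S fun l hl => Submodule.subset_span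
        (Finset.mem_coe.2 (Finset.mem_image.2 ⟨l, hl, rfl⟩)))
    · exact Submodule.subset_span (Finset.mem_coe.2 (Finset.mem_image.2
        ⟨i, Finset.mem_erase.2 ⟨hii, Finset.mem_univ _⟩, rfl⟩))
  haveI : FiniteDimensional ℝ S := FiniteDimensional.span_of_finite ℝ sFin.finite_toSet
  have hm : Module.finrank ℝ S ≤ n - 1 := by
    refine le_trans (finrank_span_finset_le_card sFin) ?_
    refine le_trans Finset.card_image_le ?_
    rw [Finset.card_erase_of_mem (Finset.mem_univ _), Finset.card_univ, Fintype.card_fin]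
  set B := stdOrthonormalBasis ℝ S with hB
  set L : S →ₗᵢ[ℝ] EuclideanSpace ℝ (Fin (n-1)) :=
    (padIso hm).comp B.repr.toLinearIsometry with hL
  refine ⟨fun i => L ⟨z i, hzmem i⟩, ?_⟩
  intro i j hij
  have h1 : L ⟨z i, hzmem i⟩ - L ⟨z j, hzmem j⟩ = L (⟨z i, hzmem i⟩ - ⟨z j, hzmem j⟩) :=
    (map_sub L _ _).symm
  rw [h1, L.norm_map]
  have h2 : ‖(⟨z i, hzmem i⟩ - ⟨z j, hzmem j⟩ : S)‖ = ‖z i - z j‖ := rfl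
  rw [h2]
  exact hnorm i j hij

theorem diNum_set_finite [NormedAddCommGroup E] (X : Fin n → E) (ℓ : Fin n → Fin k) :
    {r : ℝ | ∃ i j : Fin n, ℓ i ≠ ℓ j ∧ r = ‖X i - X j‖}.Finite :=
  Set.Finite.subset (Set.finite_range fun p : Fin n × Fin n => ‖X p.1 - X p.2‖)
    (by rintro r ⟨i, j, -, rfl⟩; exact ⟨(i, j), rfl⟩)

theorem diDen_set_finite [NormedAddCommGroup E] (X : Fin n → E) (ℓ : Fin n → Fin k) :
    {r : ℝ | ∃ i j : Fin n, ℓ i = ℓ j ∧ r = ‖X i - X j‖}.Finite :=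
  Set.Finite.subset (Set.finite_range fun p : Fin n × Fin n => ‖X p.1 - X p.2‖)
    (by rintro r ⟨i, j, -, rfl⟩; exact ⟨(i, j), rfl⟩)

theorem diNum_nonneg [NormedAddCommGroup E] {X : Fin n → E} {ℓ : Fin n → Fin k}
    (hex : ∃ i j : Fin n, ℓ i ≠ ℓ j) : 0 ≤ diNum X ℓ := by
  obtain ⟨i, j, hij⟩ := hex
  refine le_csInf (⟨‖X i - X j‖, ⟨i, j, hij, rfl⟩⟩ :
    Set.Nonempty {r : ℝ | ∃ i j : Fin n, ℓ i ≠ ℓ j ∧ r = ‖X i - X j‖}) ?_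
  rintro r ⟨i', j', -, rfl⟩
  exact norm_nonneg _

theorem diNum_mem [NormedAddCommGroup E] {X : Fin n → E} {ℓ : Fin n → Fin k}
    (hex : ∃ i j : Fin n, ℓ i ≠ ℓ j) :
    ∃ i j : Fin n, ℓ i ≠ ℓ j ∧ diNum X ℓ = ‖X i - X j‖ := by
  obtain ⟨i, j, hij⟩ := hex
  exact Set.Nonempty.csInf_mem (⟨‖X i - X j‖, ⟨i, j, hij, rfl⟩⟩ :
    Set.Nonempty {r : ℝ | ∃ i j : Fin n, ℓ i ≠ ℓ j ∧ r = ‖X i - X j‖})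
    (diNum_set_finite X ℓ)

theorem diNum_le [NormedAddCommGroup E] {X : Fin n → E} {ℓ : Fin n → Fin k}
    {i j : Fin n} (hij : ℓ i ≠ ℓ j) : diNum X ℓ ≤ ‖X i - X j‖ :=
  csInf_le (diNum_set_finite X ℓ).bddBelow ⟨i, j, hij, rfl⟩

theorem le_diDen [NormedAddCommGroup E] {X : Fin n → E} {ℓ : Fin n → Fin k}
    {i j : Fin n} (hij : ℓ i = ℓ j) : ‖X i - X j‖ ≤ diDen X ℓ :=
  le_csSup (diDen_set_finite X ℓ).bddAbove ⟨i, j, hij, rfl⟩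

theorem diDen_attained [NormedAddCommGroup E] {X : Fin n → E} {ℓ : Fin n → Fin k}
    (hpair : ∃ p q : Fin n, p ≠ q ∧ ℓ p = ℓ q) :
    ∃ p q : Fin n, p ≠ q ∧ ℓ p = ℓ q ∧ ‖X p - X q‖ = diDen X ℓ := by
  obtain ⟨p, q, hpq, hl⟩ := hpair
  have hmem := Set.Nonempty.csSup_mem (⟨‖X p - X q‖, p, q, hl, rfl⟩ :
    {r : ℝ | ∃ i j : Fin n, ℓ i = ℓ j ∧ r = ‖X i - X j‖}.Nonempty) (diDen_set_finite X ℓ)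
  obtain ⟨i, j, hij, hval⟩ := hmem
  by_cases h : i = j
  · refine ⟨p, q, hpq, hl, le_antisymm (le_diDen hl) ?_⟩
    have hd0 : diDen X ℓ = 0 := by
      unfold diDen
      rw [hval, h, sub_self, norm_zero]
    rw [hd0]
    exact norm_nonneg _
  · exact ⟨i, j, h, hij, hval.symm⟩

theorem diNum_shift [NormedAddCommGroup E] {X Xε : Fin n → E} {ℓ : Fin n → Fin k} {c : ℝ}
    (hΔ : ∀ i j : Fin n, i ≠ j → ‖Xε i - Xε j‖ ^ 2 = ‖X i - X j‖ ^ 2 + c)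
    (hc : 0 ≤ c) (hex : ∃ i j : Fin n, ℓ i ≠ ℓ j) :
    diNum Xε ℓ = Real.sqrt (diNum X ℓ ^ 2 + c) := by
  have hval : ∀ i j : Fin n, ℓ i ≠ ℓ j → ‖Xε i - Xε j‖ = Real.sqrt (‖X i - X j‖ ^ 2 + c) := by
    intro i j hij
    have hne : i ≠ j := fun h => hij (congrArg ℓ h)
    rw [← hΔ i j hne, Real.sqrt_sq (norm_nonneg _)]
  apply le_antisymm
  · obtain ⟨i, j, hij, hv⟩ := diNum_mem (X := X) hex
    have : Real.sqrt (diNum X ℓ ^ 2 + c) = ‖Xε i - Xε j‖ := by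
      rw [hval i j hij, hv]
    rw [this]
    exact diNum_le hij
  · obtain ⟨i0, j0, h0⟩ := hex
    refine le_csInf (⟨‖Xε i0 - Xε j0‖, ⟨i0, j0, h0, rfl⟩⟩ :
      Set.Nonempty {r : ℝ | ∃ i j : Fin n, ℓ i ≠ ℓ j ∧ r = ‖Xε i - Xε j‖}) ?_
    rintro r ⟨i, j, hij, rfl⟩
    rw [hval i j hij]
    apply Real.sqrt_le_sqrt
    refine add_le_add ?_ le_rfl
    exact pow_le_pow_left₀ (diNum_nonneg ⟨i0, j0, h0⟩) (diNum_le hij) 2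

theorem diDen_shift [NormedAddCommGroup E] {X Xε : Fin n → E} {ℓ : Fin n → Fin k} {c : ℝ}
    (hΔ : ∀ i j : Fin n, i ≠ j → ‖Xε i - Xε j‖ ^ 2 = ‖X i - X j‖ ^ 2 + c)
    (hc : 0 ≤ c) (hpair : ∃ p q : Fin n, p ≠ q ∧ ℓ p = ℓ q) :
    diDen Xε ℓ = Real.sqrt (diDen X ℓ ^ 2 + c) := by
  have hval : ∀ i j : Fin n, i ≠ j → ‖Xε i - Xε j‖ = Real.sqrt (‖X i - X j‖ ^ 2 + c) := by
    intro i j hij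
    rw [← hΔ i j hij, Real.sqrt_sq (norm_nonneg _)]
  have hb0 : 0 ≤ diDen X ℓ := by
    obtain ⟨p, q, hpq, hl⟩ := hpair
    exact (norm_nonneg (X p - X q)).trans (le_diDen hl)
  apply le_antisymm
  · obtain ⟨p, q, hpq, hl⟩ := hpair
    refine csSup_le (⟨‖Xε p - Xε q‖, ⟨p, q, hl, rfl⟩⟩ :
      Set.Nonempty {r : ℝ | ∃ i j : Fin n, ℓ i = ℓ j ∧ r = ‖Xε i - Xε j‖}) ?_
    rintro r ⟨i, j, hij, rfl⟩
    by_cases h : i = j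
    · rw [h, sub_self, norm_zero]
      exact Real.sqrt_nonneg _
    · rw [hval i j h]
      apply Real.sqrt_le_sqrt
      refine add_le_add ?_ le_rfl
      exact pow_le_pow_left₀ (norm_nonneg _) (le_diDen hij) 2
  · obtain ⟨p, q, hpq, hl, hv⟩ := diDen_attained (X := X) hpair
    have : Real.sqrt (diDen X ℓ ^ 2 + c) = ‖Xε p - Xε q‖ := by
      rw [hval p q hpq, hv]
    rw [this]
    exact le_diDen hl

end Helpers

/-- Theorem `unclustHammerDunn`: any stationary t-SNE output can be produced
by an input whose Dunn index is any prescribed value in `(1, DI(X)]`. -/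
theorem DI_impostor (n k d : ℕ) (hk : 1 < k) (hkn : k < n) (hd : 1 ≤ d)
    (X : Fin n → EuclideanSpace ℝ (Fin (n - 1)))
    (ℓ : Fin n → Fin k)
    (hcard : ∀ m : Fin k, 1 < (cluster ℓ m).card)
    (hDI : 1 < DIindex X ℓ) :
    ∀ ε : EReal, 1 < ε → ε ≤ DIindex X ℓ →
      ∃ Xε : Fin n → EuclideanSpace ℝ (Fin (n - 1)),
        DIindex Xε ℓ = ε ∧
        ∀ ρ : ℝ, 1 < ρ → ρ < (n : ℝ) - 1 → TSNE d ρ X = TSNE d ρ Xε := by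
  classical
  intro ε hε1 hε2
  have hn : 0 < n := lt_trans (lt_trans one_pos hk) hkn
  have hk0 : (0 : ℕ) < k := lt_trans one_pos hk
  set m0 : Fin k := ⟨0, hk0⟩ with hm0
  set m1 : Fin k := ⟨1, hk⟩ with hm1
  have hclne : ∀ m : Fin k, ∃ i : Fin n, ℓ i = m := by
    intro m
    obtain ⟨i, hi⟩ := Finset.card_pos.1 (lt_trans one_pos (hcard m))
    exact ⟨i, (Finset.mem_filter.1 hi).2⟩
  obtain ⟨p0, hp0⟩ := hclne m0
  obtain ⟨p1, hp1⟩ := hclne m1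
  have hex : ∃ i j : Fin n, ℓ i ≠ ℓ j := by
    refine ⟨p0, p1, ?_⟩
    rw [hp0, hp1]
    simp [hm0, hm1, Fin.ext_iff]
  have hpair : ∃ p q : Fin n, p ≠ q ∧ ℓ p = ℓ q := by
    obtain ⟨p, hp, q, hq, hpq⟩ := Finset.one_lt_card.1 (hcard m0)
    exact ⟨p, q, hpq, ((Finset.mem_filter.1 hp).2).trans ((Finset.mem_filter.1 hq).2).symm⟩
  set a : ℝ := diNum X ℓ with hadef
  set b : ℝ := diDen X ℓ with hbdef
  have ha0 : 0 ≤ a := diNum_nonneg hex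
  have hb0 : 0 ≤ b := by
    obtain ⟨p, q, hpq, hl⟩ := hpair
    exact (norm_nonneg (X p - X q)).trans (le_diDen hl)
  have hεbot : ε ≠ ⊥ := (lt_of_le_of_lt bot_le hε1).ne'
  -- a uniform construction for any shift c ≥ 0
  have construct : ∀ c : ℝ, 0 ≤ c →
      ∃ Xε : Fin n → EuclideanSpace ℝ (Fin (n - 1)),
        diNum Xε ℓ = Real.sqrt (a ^ 2 + c) ∧ diDen Xε ℓ = Real.sqrt (b ^ 2 + c) ∧
        ∀ ρ : ℝ, TSNE (n := n) d ρ X = TSNE d ρ Xε := by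
    intro c hc
    obtain ⟨Xε, hΔ⟩ := exists_shift hn X hc
    exact ⟨Xε, diNum_shift hΔ hc hex, diDen_shift hΔ hc hpair,
      fun ρ => TSNE_shift (condAffinity_shift hΔ) d ρ⟩
  unfold DIindex at hDI hε2
  rw [← hadef, ← hbdef] at hDI hε2
  by_cases hb : b = 0
  · rw [if_pos hb] at hDI hε2
    have haz : a ≠ 0 := by
      intro h
      rw [if_pos h] at hDI
      exact lt_irrefl _ hDI
    rw [if_neg haz] at hDI hε2
    by_cases hεt : ε = ⊤
    · refine ⟨X, ?_, fun ρ _ _ => rfl⟩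
      unfold DIindex
      rw [← hadef, ← hbdef, if_pos hb, if_neg haz, hεt]
    · set r : ℝ := ε.toReal with hrdef
      have hεr : ε = (r : EReal) := (EReal.coe_toReal hεt hεbot).symm
      have hr1 : (1 : ℝ) < r := by
        rw [hεr, ← EReal.coe_one, EReal.coe_lt_coe_iff] at hε1
        exact hε1
      have hapos : 0 < a := lt_of_le_of_ne ha0 (Ne.symm haz)
      set c : ℝ := a ^ 2 / (r ^ 2 - 1) with hcdef
      have hr2 : (0:ℝ) < r ^ 2 - 1 := by nlinarith
      have hcpos : 0 < c := div_pos (pow_pos hapos 2) hr2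
      obtain ⟨Xε, hnum, hden, htsne⟩ := construct c hcpos.le
      have hbc : (0:ℝ) < b ^ 2 + c := by
        rw [hb]
        simpa using hcpos
      have hdenpos : 0 < diDen Xε ℓ := by
        rw [hden]
        exact Real.sqrt_pos.2 hbc
      refine ⟨Xε, ?_, fun ρ _ _ => htsne ρ⟩
      unfold DIindex
      rw [if_neg hdenpos.ne', hnum, hden, hεr]
      have hkey : Real.sqrt (a ^ 2 + c) / Real.sqrt (b ^ 2 + c) = r := by
        have h1 : a ^ 2 + c = r ^ 2 * (b ^ 2 + c) := by
          rw [hb, hcdef]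
          field_simp
          ring
        rw [h1, Real.sqrt_mul (sq_nonneg r), Real.sqrt_sq (by linarith),
          mul_div_assoc, div_self (Real.sqrt_pos.2 hbc).ne', mul_one]
      rw [hkey]
  · rw [if_neg hb] at hDI hε2
    have hbpos : 0 < b := lt_of_le_of_ne hb0 (Ne.symm hb)
    have hab : (1:ℝ) < a / b := by
      rw [← EReal.coe_one, EReal.coe_lt_coe_iff] at hDI
      exact hDI
    have hba : b < a := (one_lt_div hbpos).1 hab
    have hεt : ε ≠ ⊤ := ne_top_of_le_ne_top (EReal.coe_ne_top _) hε2
    set r : ℝ := ε.toReal with hrdef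
    have hεr : ε = (r : EReal) := (EReal.coe_toReal hεt hεbot).symm
    have hr1 : (1 : ℝ) < r := by
      rw [hεr, ← EReal.coe_one, EReal.coe_lt_coe_iff] at hε1
      exact hε1
    have hrab : r ≤ a / b := by
      rw [hεr, EReal.coe_le_coe_iff] at hε2
      exact hε2
    have hr2 : (0:ℝ) < r ^ 2 - 1 := by nlinarith
    have hrb : r * b ≤ a := (le_div_iff₀ hbpos).1 hrab
    set c : ℝ := (a ^ 2 - r ^ 2 * b ^ 2) / (r ^ 2 - 1) with hcdef
    have hc0 : 0 ≤ c := by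
      apply div_nonneg _ hr2.le
      nlinarith [pow_le_pow_left₀ (by positivity : (0:ℝ) ≤ r * b) hrb 2]
    obtain ⟨Xε, hnum, hden, htsne⟩ := construct c hc0
    have hbc : (0:ℝ) < b ^ 2 + c := by
      have : b ^ 2 + c = (a ^ 2 - b ^ 2) / (r ^ 2 - 1) := by
        rw [hcdef]
        field_simp
        ring
      rw [this]
      apply div_pos _ hr2
      nlinarith
    have hdenpos : 0 < diDen Xε ℓ := by
      rw [hden]
      exact Real.sqrt_pos.2 hbc
    refine ⟨Xε, ?_, fun ρ _ _ => htsne ρ⟩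
    unfold DIindex
    rw [if_neg hdenpos.ne', hnum, hden, hεr]
    have hkey : Real.sqrt (a ^ 2 + c) / Real.sqrt (b ^ 2 + c) = r := by
      have h1 : a ^ 2 + c = r ^ 2 * (b ^ 2 + c) := by
        rw [hcdef]
        field_simp
        ring
      rw [h1, Real.sqrt_mul (sq_nonneg r), Real.sqrt_sq (by linarith),
        mul_div_assoc, div_self (Real.sqrt_pos.2 hbc).ne', mul_one]
    rw [hkey]


end TSNEPaper
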